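/- Suppose an even positive integer n cannot be expressed as the sum of two squares and at most one power of 2. Then for every integer α ≥ 0, the number 2^α · n also cannot be expressed as the sum of two squares and at most one power of 2. -/
import Mathlib


/-- A natural number `m` is a sum of two squares and at most one power of 2. -/
def IsSumTwoSquaresAddAtMostOnePow (m : ℕ) : Prop :=
  ∃ x y : ℤ, (m : ℤ) = x ^ 2 + y ^ 2 ∨ ∃ a : ℕ, (m : ℤ) = x ^ 2 + y ^ 2 + 2 ^ a

lemma descent_step (m : ℕ) (hm : Even m)
    (h : IsSumTwoSquaresAddAtMostOnePow (2 * m)) :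
    IsSumTwoSquaresAddAtMostOnePow m := by
  obtain ⟨x, y, hx | ⟨a, ha⟩⟩ := h
  · push_cast at hx
    have h2 : Even (x ^ 2 + y ^ 2) := ⟨(m : ℤ), by linarith⟩
    have hxy : Even (x + y) := by
      simp [Int.even_add, parity_simps] at h2 ⊢; tauto
    obtain ⟨k, hk⟩ := hxy
    refine ⟨k, k - y, Or.inl ?_⟩
    have hx' : x = k + k - y := by omega
    subst hx'
    have h3 : 2 * (m : ℤ) = 2 * (k ^ 2 + (k - y) ^ 2) := by linear_combination hx
    linarith
  · push_cast at ha
    cases a with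
    | zero =>
      exfalso
      obtain ⟨t, ht⟩ := hm
      norm_num at ha
      rcases Int.even_or_odd x with ⟨c, hc⟩ | ⟨c, hc⟩ <;>
        rcases Int.even_or_odd y with ⟨d, hd⟩ | ⟨d, hd⟩ <;> subst hc hd
      · have key : 2 * (m : ℤ) = 4 * (c * c) + 4 * (d * d) + 1 := by
          linear_combination ha
        generalize c * c = e at key
        generalize d * d = f at key
        omega
      · have key : 2 * (m : ℤ) = 4 * (c * c) + 4 * (d * d) + 4 * d + 2 := by
          linear_combination ha
        generalize c * c = e at key
        generalize d * d = f at key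
        omega
      · have key : 2 * (m : ℤ) = 4 * (c * c) + 4 * c + 4 * (d * d) + 2 := by
          linear_combination ha
        generalize c * c = e at key
        generalize d * d = f at key
        omega
      · have key : 2 * (m : ℤ) = 4 * (c * c) + 4 * c + 4 * (d * d) + 4 * d + 3 := by
          linear_combination ha
        generalize c * c = e at key
        generalize d * d = f at key
        omega
    | succ b =>
      rw [pow_succ 2 b] at ha
      have h2 : Even (x ^ 2 + y ^ 2) := ⟨(m : ℤ) - 2 ^ b, by linarith⟩
      have hxy : Even (x + y) := by
        simp [Int.even_add, parity_simps] at h2 ⊢; tauto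
      obtain ⟨k, hk⟩ := hxy
      refine ⟨k, k - y, Or.inr ⟨b, ?_⟩⟩
      have hx' : x = k + k - y := by omega
      subst hx'
      have h3 : 2 * (m : ℤ) = 2 * (k ^ 2 + (k - y) ^ 2 + 2 ^ b) := by
        linear_combination ha
      linarith

theorem tower_one_pow (n : ℕ) (hn : 0 < n) (hev : Even n)
    (h : ¬ IsSumTwoSquaresAddAtMostOnePow n) :
    ∀ α : ℕ, ¬ IsSumTwoSquaresAddAtMostOnePow (2 ^ α * n) := by
  intro α
  induction α with
  | zero => simpa using h
  | succ β ih =>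
    intro hrep
    apply ih
    apply descent_step _ (hev.mul_left _)
    have e : 2 ^ (β + 1) * n = 2 * (2 ^ β * n) := by ring
    rwa [e] at hrep
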